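/- Let μ be a Borel probability measure on ℝ^d and (B_n) a sequence of balls with radii tending to 0. If (B_n) is μ-asymptotically covering, then μ(limsup_{n→∞} B_n) = 1. -/
import Mathlib


open MeasureTheory Metric Set Filter
open scoped ENNReal Topology

/-- `μ`-asymptotically covering property. -/
def muAC {d : ℕ} (μ : Measure (Fin d → ℝ)) (x : ℕ → Fin d → ℝ) (r : ℕ → ℝ) : Prop :=
  ∃ C : ℝ≥0∞, 0 < C ∧ ∀ Ω : Set (Fin d → ℝ), IsOpen Ω → ∀ g : ℕ,
    ∃ F : Finset ℕ, (∀ n ∈ F, g ≤ n) ∧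
      (∀ n ∈ F, closedBall (x n) (r n) ⊆ Ω) ∧
      ((F : Set ℕ).Pairwise fun m n =>
        Disjoint (closedBall (x m) (r m)) (closedBall (x n) (r n))) ∧
      C * μ Ω ≤ μ (⋃ n ∈ F, closedBall (x n) (r n))

/-- if `(B_n)` is `μ`-a.c. with radii tending to `0`, then
`μ(limsup B_n) = 1`. -/
theorem stmt3 {d : ℕ} (μ : Measure (Fin d → ℝ)) [IsProbabilityMeasure μ]
    (x : ℕ → Fin d → ℝ) (r : ℕ → ℝ) (hr0 : ∀ n, 0 < r n)
    (hr : Tendsto r atTop (𝓝 0)) (hac : muAC μ x r) :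
    μ (⋂ g : ℕ, ⋃ n, ⋃ _ : g ≤ n, closedBall (x n) (r n)) = 1 := by
  obtain ⟨C, hC, hAC⟩ := hac
  set E : ℕ → Set (Fin d → ℝ) := fun g => ⋃ n, ⋃ _ : g ≤ n, closedBall (x n) (r n) with hE
  have hEmeas : ∀ g, MeasurableSet (E g) := fun g =>
    MeasurableSet.iUnion fun n => MeasurableSet.iUnion fun _ => measurableSet_closedBall
  have key : ∀ g, μ (E g) = 1 := by
    intro g
    rw [← prob_compl_eq_zero_iff (hEmeas g)]
    set t := μ (E g)ᶜ with ht
    have htfin : t ≠ ∞ := (measure_lt_top μ _).ne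
    have hCt : C * t = 0 := by
      rw [← le_zero_iff]
      refine ENNReal.le_of_forall_pos_le_add fun ε hε _ => ?_
      rw [zero_add]
      -- outer regularity: open U ⊇ (E g)ᶜ with μ U < t + ε
      obtain ⟨U, hUsub, hUopen, hUlt⟩ :=
        Set.exists_isOpen_lt_add (E g)ᶜ htfin (by exact_mod_cast hε.ne' : (ε : ℝ≥0∞) ≠ 0)
      obtain ⟨F, hFg, hFsub, -, hFmeas⟩ := hAC U hUopen g
      have hsub : (⋃ n ∈ F, closedBall (x n) (r n)) ⊆ E g ∩ U := by
        intro y hy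
        simp only [mem_iUnion] at hy
        obtain ⟨n, hnF, hy⟩ := hy
        exact ⟨mem_iUnion.2 ⟨n, mem_iUnion.2 ⟨hFg n hnF, hy⟩⟩, hFsub n hnF hy⟩
      have h1 : μ (E g ∩ U) = μ U - t := by
        have : μ (E g ∩ U) + μ ((E g)ᶜ ∩ U) = μ U := by
          rw [← measure_inter_add_diff U (hEmeas g), Set.inter_comm U (E g), Set.diff_eq, Set.inter_comm U]
        have h2 : (E g)ᶜ ∩ U = (E g)ᶜ := Set.inter_eq_left.2 hUsub
        rw [h2] at this
        rw [← this, ENNReal.add_sub_cancel_right htfin]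
      have h3 : μ (E g ∩ U) ≤ ε := by
        rw [h1]
        have := hUlt.le
        exact tsub_le_iff_right.2 (by rwa [add_comm t ε] at this)
      calc C * t ≤ C * μ U := by
            exact mul_le_mul_right (measure_mono hUsub) C
        _ ≤ μ (⋃ n ∈ F, closedBall (x n) (r n)) := hFmeas
        _ ≤ μ (E g ∩ U) := measure_mono hsub
        _ ≤ ε := h3
    rcases mul_eq_zero.1 hCt with h | h
    · exact absurd h hC.ne'
    · exact h
  have hcompl : μ (⋂ g, E g)ᶜ = 0 := by
    rw [Set.compl_iInter]
    exact measure_iUnion_null fun g => (prob_compl_eq_zero_iff (hEmeas g)).2 (key g)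
  exact (prob_compl_eq_zero_iff (MeasurableSet.iInter fun g => hEmeas g)).1 hcompl
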